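/- Let m ∈ {0,…,N−1}, k ∈ {0,…,C−1}, ν ∈ ℝ, and let τ satisfy k·T_SC ≤ τ < k·T_SC + min{T_SC − t_{m,1}, t_{m,1}}. Set q̃ = k + 1, E = 2·c̃₁·τ − k/Δt − ν, and Ẽ = E − 1/Δt. Then the auto-ambiguity function of the m-th AFDM chirp subcarrier admits the closed form A_{φ_m,φ_m}(τ, ν) = exp(2πi·((m/T)·τ − c̃₁·τ²)) · [ Σ_{i=0}^{C−q̃} exp(−2πi·(i/Δt)·τ) · ( I(E, t_{m,i} + τ, t_{m,i+q̃}) + I(Ẽ, t_{m,i+q̃}, t_{m,i+1} + τ) ) + exp(−2πi·((C−q̃+1)/Δt)·τ) · I(E, t_{m,C−q̃+1} + τ, T) ]. -/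

import Mathlib

open MeasureTheory Complex Real

noncomputable section

namespace AFDM

variable (N C : ℕ) (Δt : ℝ)

/-- Frame duration `T = N·Δt`. -/
def T : ℝ := N * Δt

/-- Chirp rate parameter `c̃₁ = C/(2·T·Δt)`. -/
def ctil : ℝ := C / (2 * T N Δt * Δt)

/-- Subchirp duration `T_SC = T/C`. -/
def TSC : ℝ := T N Δt / C

/-- Spectrum wrapping points `t_{m,q}`: `t_{m,0} = 0`, `t_{m,q} = q·T/C − m·Δt/C` for
`q = 1,…,C`, and `t_{m,C+1} = T`. -/
def tp (m q : ℕ) : ℝ :=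
  if q = 0 then 0 else if q ≤ C then q * T N Δt / C - m * Δt / C else T N Δt

/-- Wrapping index function `q_m(t)`: equals `q` on `[t_{m,q}, t_{m,q+1})` for `t ∈ [0,T)`. -/
def qm (m : ℕ) (t : ℝ) : ℤ :=
  (((Finset.range (C + 1)).filter (fun q => tp N C Δt m q ≤ t)).card : ℤ) - 1

/-- The `m`-th continuous-time AFDM chirp subcarrier with parameter `c₂`:
`φ_m(t) = exp(2πi(c₂·m² + c̃₁·t² + (m/T)·t − q_m(t)·t/Δt))` on `[0,T)`, `0` otherwise. -/
def phi (c₂ : ℝ) (m : ℕ) (t : ℝ) : ℂ :=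
  if 0 ≤ t ∧ t < T N Δt then
    Complex.exp (2 * Real.pi * Complex.I *
      ((c₂ * (m : ℝ) ^ 2 + ctil N C Δt * t ^ 2 + ((m : ℝ) / T N Δt) * t
        - (qm N C Δt m t : ℝ) * t / Δt : ℝ) : ℂ))
  else 0

/-- The aperiodic ambiguity function `A_{a,b}(τ,ν) = ∫ a(t)·conj(b(t−τ))·exp(−2πiνt) dt`. -/
def AF (a b : ℝ → ℂ) (τ ν : ℝ) : ℂ :=
  ∫ t : ℝ, a t * (starRingEnd ℂ) (b (t - τ)) *
    Complex.exp (-(2 * Real.pi * Complex.I * ((ν * t : ℝ) : ℂ)))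

/-- The integral indicator `I(c, t₁, t₂)`. -/
def Iind (c t₁ t₂ : ℝ) : ℂ :=
  if c ≠ 0 then
    (Complex.exp (2 * Real.pi * Complex.I * ((c * t₂ : ℝ) : ℂ))
      - Complex.exp (2 * Real.pi * Complex.I * ((c * t₁ : ℝ) : ℂ))) /
      (2 * Real.pi * Complex.I * ((c : ℝ) : ℂ))
  else ((t₂ - t₁ : ℝ) : ℂ)

section Helpers

variable {N C : ℕ} {Δt : ℝ} {m : ℕ}

lemma tp_zero : tp N C Δt m 0 = 0 := by simp [tp]

lemma tp_val {q : ℕ} (h1 : 1 ≤ q) (h2 : q ≤ C) :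
    tp N C Δt m q = q * T N Δt / C - m * Δt / C := by
  unfold tp; rw [if_neg (by omega), if_pos h2]

lemma tp_last {q : ℕ} (h : C < q) : tp N C Δt m q = T N Δt := by
  unfold tp; rw [if_neg (by omega), if_neg (by omega)]

lemma tp_mono (hN : 0 < N) (hC : 0 < C) (hΔt : 0 < Δt) (hm : m ≤ N) :
    Monotone (tp N C Δt m) := by
  have hC' : (0:ℝ) < C := by exact_mod_cast hC
  have hm' : (m:ℝ) ≤ N := by exact_mod_cast hm
  have hN' : (0:ℝ) < N := by exact_mod_cast hN
  have hT : (0:ℝ) < T N Δt := by unfold T; positivity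
  apply monotone_nat_of_le_succ
  intro q
  rcases Nat.eq_zero_or_pos q with rfl | hq1
  · rw [tp_zero, tp_val le_rfl hC]
    rw [← sub_div]
    apply div_nonneg _ hC'.le
    unfold T
    push_cast
    nlinarith
  · by_cases h2 : q + 1 ≤ C
    · rw [tp_val hq1 (by omega), tp_val (by omega) h2]
      have key : (q:ℝ) * T N Δt ≤ ((q+1:ℕ):ℝ) * T N Δt := by push_cast; nlinarith
      have key2 : (q:ℝ) * T N Δt / C ≤ ((q+1:ℕ):ℝ) * T N Δt / C := by gcongr
      linarith
    · by_cases h3 : q ≤ C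
      · rw [tp_val hq1 h3, tp_last (by omega : C < q + 1)]
        have hq' : (q:ℝ) = C := by exact_mod_cast congrArg (Nat.cast : ℕ → ℝ) (by omega : q = C)
        rw [hq']
        have e1 : (C:ℝ) * T N Δt / C = T N Δt := by field_simp
        have e2 : (0:ℝ) ≤ m * Δt / C := by positivity
        linarith
      · rw [tp_last (by omega), tp_last (by omega)]

lemma tp_nonneg (hN : 0 < N) (hC : 0 < C) (hΔt : 0 < Δt) (hm : m ≤ N) (q : ℕ) :
    0 ≤ tp N C Δt m q := by
  have := tp_mono (N := N) (C := C) (Δt := Δt) (m := m) hN hC hΔt hm (Nat.zero_le q)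
  rwa [tp_zero] at this

lemma tp_le_T (hN : 0 < N) (hC : 0 < C) (hΔt : 0 < Δt) (hm : m ≤ N) (q : ℕ) :
    tp N C Δt m q ≤ T N Δt := by
  have h2 := tp_mono (N := N) (C := C) (Δt := Δt) (m := m) hN hC hΔt hm
    (show q ≤ q + C + 1 by omega)
  rwa [tp_last (show C < q + C + 1 by omega)] at h2

lemma qm_eq (hN : 0 < N) (hC : 0 < C) (hΔt : 0 < Δt) (hm : m ≤ N) {q : ℕ} (hq : q ≤ C)
    {t : ℝ} (h1 : tp N C Δt m q ≤ t) (h2 : t < tp N C Δt m (q+1)) :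
    qm N C Δt m t = q := by
  have hmono := tp_mono (N := N) (C := C) (Δt := Δt) (m := m) hN hC hΔt hm
  unfold qm
  have hset : (Finset.range (C+1)).filter (fun j => tp N C Δt m j ≤ t)
      = Finset.range (q+1) := by
    ext j
    simp only [Finset.mem_filter, Finset.mem_range]
    constructor
    · rintro ⟨hj, hjt⟩
      by_contra hcon
      have hle : q + 1 ≤ j := by omega
      have := hmono hle
      linarith
    · intro hj
      exact ⟨by omega, le_trans (hmono (by omega : j ≤ q)) h1⟩
  rw [hset, Finset.card_range]
  push_cast
  ring

lemma phi_eq (hN : 0 < N) (hC : 0 < C) (hΔt : 0 < Δt) (hm : m ≤ N) {q : ℕ} (hq : q ≤ C)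
    {t : ℝ} (ht : 0 ≤ t) (ht' : t < T N Δt)
    (h1 : tp N C Δt m q ≤ t) (h2 : t < tp N C Δt m (q+1)) (c₂ : ℝ) :
    phi N C Δt c₂ m t = Complex.exp (2 * Real.pi * Complex.I *
      ((c₂ * (m : ℝ) ^ 2 + ctil N C Δt * t ^ 2 + ((m : ℝ) / T N Δt) * t
        - (q : ℝ) * t / Δt : ℝ) : ℂ)) := by
  unfold phi
  rw [if_pos ⟨ht, ht'⟩, qm_eq hN hC hΔt hm hq h1 h2]
  norm_cast

end Helpers

section Helpers2

variable {N C : ℕ} {Δt : ℝ} {m : ℕ}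

lemma integrand_formula (hN : 0 < N) (hC : 0 < C) (hΔt : 0 < Δt) (hm : m ≤ N)
    {qt qs : ℕ} (hqt : qt ≤ C) (hqs : qs ≤ C) {c₂ ν τ t : ℝ}
    (ht0 : 0 ≤ t) (htT : t < T N Δt) (hs0 : 0 ≤ t - τ) (hsT : t - τ < T N Δt)
    (h1 : tp N C Δt m qt ≤ t) (h2 : t < tp N C Δt m (qt+1))
    (h3 : tp N C Δt m qs ≤ t - τ) (h4 : t - τ < tp N C Δt m (qs+1)) :
    phi N C Δt c₂ m t * (starRingEnd ℂ) (phi N C Δt c₂ m (t - τ)) *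
      Complex.exp (-(2 * Real.pi * Complex.I * ((ν * t : ℝ) : ℂ))) =
    Complex.exp (2 * Real.pi * Complex.I *
      (((2 * ctil N C Δt * τ - (qt:ℝ)/Δt + (qs:ℝ)/Δt - ν) * t +
        (((m:ℝ)/T N Δt) * τ - ctil N C Δt * τ^2 - (qs:ℝ) * τ / Δt) : ℝ) : ℂ)) := by
  rw [phi_eq hN hC hΔt hm hqt ht0 htT h1 h2 c₂,
      phi_eq hN hC hΔt hm hqs hs0 hsT h3 h4 c₂,
      ← Complex.exp_conj, ← Complex.exp_add, ← Complex.exp_add]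
  congr 1
  simp only [map_mul, Complex.conj_ofReal, Complex.conj_I, map_ofNat]
  push_cast
  ring

lemma sum_range_two_mul (M : ℕ) (g : ℕ → ℂ) :
    ∑ j ∈ Finset.range (2*M), g j = ∑ i ∈ Finset.range M, (g (2*i) + g (2*i+1)) := by
  induction M with
  | zero => simp
  | succ M ih =>
    have h : 2*(M+1) = (2*M+1)+1 := by omega
    rw [h, Finset.sum_range_succ, Finset.sum_range_succ, ih, Finset.sum_range_succ]
    ring

lemma integral_exp_linear (α β a b : ℝ) :
    (∫ t in a..b, Complex.exp (2 * Real.pi * Complex.I * ((α * t + β : ℝ) : ℂ))) =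
      Complex.exp (2 * Real.pi * Complex.I * ((β : ℝ) : ℂ)) * Iind α a b := by
  have h1 : ∀ t : ℝ, (2 * Real.pi * Complex.I * ((α * t + β : ℝ) : ℂ)) =
      (2 * Real.pi * Complex.I * (α:ℂ)) * (t:ℂ) + 2 * Real.pi * Complex.I * ((β:ℝ):ℂ) := by
    intro t; push_cast; ring
  simp only [h1, Complex.exp_add]
  rcases eq_or_ne α 0 with rfl | h
  · simp only [Complex.ofReal_zero, mul_zero, zero_mul, Complex.exp_zero, one_mul, Iind,
      ne_eq, not_true_eq_false, if_false, intervalIntegral.integral_const]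
    rw [Complex.real_smul]
    push_cast; ring
  · have hc : (2 * Real.pi * Complex.I * (α:ℂ)) ≠ 0 := by
      apply mul_ne_zero
      apply mul_ne_zero
      · simp [Real.pi_ne_zero]
      · exact Complex.I_ne_zero
      · exact_mod_cast Complex.ofReal_ne_zero.mpr h
    rw [intervalIntegral.integral_mul_const, integral_exp_mul_complex hc]
    rw [Iind, if_pos h]
    push_cast
    ring

lemma integral_piece {f : ℝ → ℂ} {a b α β : ℝ} (hab : a ≤ b)
    (h : ∀ t ∈ Set.Ioo a b, f t = Complex.exp (2 * Real.pi * Complex.I * ((α * t + β : ℝ) : ℂ))) :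
    IntervalIntegrable f MeasureTheory.volume a b ∧
      (∫ t in a..b, f t) = Complex.exp (2 * Real.pi * Complex.I * ((β : ℝ) : ℂ)) * Iind α a b := by
  set g : ℝ → ℂ := fun t => Complex.exp (2 * Real.pi * Complex.I * ((α * t + β : ℝ) : ℂ)) with hg
  have hcont : Continuous g := by
    apply Complex.continuous_exp.comp
    exact continuous_const.mul (Complex.continuous_ofReal.comp (by continuity))
  have hae : ∀ᵐ t ∂(MeasureTheory.volume : MeasureTheory.Measure ℝ),
      t ∈ Set.uIoc a b → f t = g t := by
    have hb : ∀ᵐ t ∂(MeasureTheory.volume : MeasureTheory.Measure ℝ), t ≠ b := by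
      rw [MeasureTheory.ae_iff]; simpa using MeasureTheory.measure_singleton b
    filter_upwards [hb] with t ht htmem
    rw [Set.uIoc_of_le hab] at htmem
    exact h t ⟨htmem.1, lt_of_le_of_ne htmem.2 ht⟩
  have haer : f =ᵐ[MeasureTheory.volume.restrict (Set.uIoc a b)] g :=
    (MeasureTheory.ae_restrict_iff' measurableSet_uIoc).mpr hae
  constructor
  · exact (hcont.intervalIntegrable a b).congr_ae haer.symm
  · rw [intervalIntegral.integral_congr_ae hae]
    exact integral_exp_linear α β a b

/-- Partition points for the ambiguity-function integral. -/
def pt (N C : ℕ) (Δt : ℝ) (m k : ℕ) (τ : ℝ) (j : ℕ) : ℝ :=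
  if Even j then tp N C Δt m (j/2) + τ else tp N C Δt m (j/2 + (k+1))

lemma pt_even (k : ℕ) (τ : ℝ) (i : ℕ) :
    pt N C Δt m k τ (2*i) = tp N C Δt m i + τ := by
  have h1 : Even (2*i) := even_two_mul i
  have h2 : 2*i/2 = i := by omega
  simp only [pt, if_pos h1, h2]

lemma pt_odd (k : ℕ) (τ : ℝ) (i : ℕ) :
    pt N C Δt m k τ (2*i+1) = tp N C Δt m (i + (k+1)) := by
  have h1 : ¬ Even (2*i+1) := by
    rw [Nat.even_add_one, not_not]; exact even_two_mul i
  have h2 : (2*i+1)/2 = i := by omega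
  simp only [pt, if_neg h1, h2]

/-- The integrand of the auto-ambiguity function. -/
def fIg (N C : ℕ) (Δt c₂ : ℝ) (m : ℕ) (τ ν : ℝ) (t : ℝ) : ℂ :=
  phi N C Δt c₂ m t * (starRingEnd ℂ) (phi N C Δt c₂ m (t - τ)) *
    Complex.exp (-(2 * Real.pi * Complex.I * ((ν * t : ℝ) : ℂ)))

end Helpers2

/-- Closed form of the auto-ambiguity function of the `m`-th AFDM chirp subcarrier for `τ`
in the `k`-th subchirp window, with `q̃ = k + 1`, `E = 2·c̃₁·τ − k/Δt − ν` and
`Ẽ = E − 1/Δt`. -/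
theorem aaf_closed_form
    (N C : ℕ) (hN : 0 < N) (hNeven : Even N) (hC : 0 < C)
    (Δt : ℝ) (hΔt : 0 < Δt) (c₂ : ℝ) (m k : ℕ) (hm : m < N) (hk : k < C) (ν τ : ℝ)
    (hτ1 : (k : ℝ) * TSC N C Δt ≤ τ)
    (hτ2 : τ < (k : ℝ) * TSC N C Δt + min (TSC N C Δt - tp N C Δt m 1) (tp N C Δt m 1)) :
    AF (phi N C Δt c₂ m) (phi N C Δt c₂ m) τ ν =
      Complex.exp (2 * Real.pi * Complex.I *
          ((((m : ℝ) / T N Δt) * τ - ctil N C Δt * τ ^ 2 : ℝ) : ℂ)) *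
        ((∑ i ∈ Finset.range (C - k),
            Complex.exp (-(2 * Real.pi * Complex.I * ((((i : ℝ) / Δt) * τ : ℝ) : ℂ))) *
              (Iind (2 * ctil N C Δt * τ - (k : ℝ) / Δt - ν)
                  (tp N C Δt m i + τ) (tp N C Δt m (i + (k + 1))) +
                Iind (2 * ctil N C Δt * τ - (k : ℝ) / Δt - ν - 1 / Δt)
                  (tp N C Δt m (i + (k + 1))) (tp N C Δt m (i + 1) + τ))) +
          Complex.exp (-(2 * Real.pi * Complex.I *
              (((((C - k : ℕ) : ℝ)) / Δt * τ : ℝ) : ℂ))) *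
            Iind (2 * ctil N C Δt * τ - (k : ℝ) / Δt - ν)
              (tp N C Δt m (C - k) + τ) (T N Δt)) := by
  have hC' : (0:ℝ) < C := by exact_mod_cast hC
  have hN' : (0:ℝ) < N := by exact_mod_cast hN
  have hT : (0:ℝ) < T N Δt := by unfold T; positivity
  have hTs : (0:ℝ) < TSC N C Δt := by unfold TSC T; positivity
  have hτ0 : 0 ≤ τ := le_trans (mul_nonneg (Nat.cast_nonneg k) hTs.le) hτ1
  rcases Nat.eq_zero_or_pos m with rfl | hm1
  · exfalso
    have h1 : tp N C Δt 0 1 = TSC N C Δt := by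
      rw [tp_val le_rfl hC]; unfold TSC; push_cast; ring
    rw [h1, sub_self, min_eq_left hTs.le] at hτ2
    linarith
  have hm' : (0:ℝ) < m := by exact_mod_cast hm1
  have hmN : (m:ℝ) < N := by exact_mod_cast hm
  have hmle : m ≤ N := hm.le
  have htp1 : tp N C Δt m 1 = TSC N C Δt - (m:ℝ)*Δt/C := by
    rw [tp_val le_rfl hC]; unfold TSC; push_cast; ring
  have hμpos : 0 < (m:ℝ)*Δt/C := by positivity
  have hμlt : (m:ℝ)*Δt/C < TSC N C Δt := by
    unfold TSC T
    rw [div_lt_div_iff₀ hC' hC']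
    nlinarith [mul_lt_mul_of_pos_right (mul_lt_mul_of_pos_right hmN hΔt) hC']
  have hA : τ < (k:ℝ)*TSC N C Δt + (m:ℝ)*Δt/C := by
    have h := hτ2.trans_le (add_le_add le_rfl (min_le_left _ _))
    rw [htp1] at h; linarith
  have hB : τ < (k:ℝ)*TSC N C Δt + (TSC N C Δt - (m:ℝ)*Δt/C) := by
    have h := hτ2.trans_le (add_le_add le_rfl (min_le_right _ _))
    rw [htp1] at h; linarith
  have hTC : T N Δt = C * TSC N C Δt := by unfold TSC; field_simp
  have hk1C : (k:ℝ) + 1 ≤ C := by exact_mod_cast (show k + 1 ≤ C by omega)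
  have hτT : τ ≤ T N Δt := by
    rw [hTC]
    nlinarith [mul_le_mul_of_nonneg_right hk1C hTs.le]
  set M := C - k with hM
  have hM1 : 1 ≤ M := by omega
  have tpv : ∀ q : ℕ, 1 ≤ q → q ≤ C → tp N C Δt m q = (q:ℝ) * TSC N C Δt - (m:ℝ)*Δt/C := by
    intro q h1 h2; rw [tp_val h1 h2]; unfold TSC; ring
  -- the two key ordering facts
  have key2 : ∀ i : ℕ, i ≤ M+1 → tp N C Δt m (i+k) ≤ tp N C Δt m i + τ := by
    intro i hi
    rcases Nat.eq_zero_or_pos i with rfl | hi1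
    · rw [tp_zero, show (0:ℕ) + k = k from by omega, zero_add]
      rcases Nat.eq_zero_or_pos k with rfl | hk1
      · rw [tp_zero]; exact hτ0
      · rw [tpv k hk1 hk.le]
        linarith
    · by_cases h2 : i + k ≤ C
      · rw [tpv (i+k) (by omega) h2, tpv i hi1 (by omega)]
        push_cast
        linarith [hτ1]
      · rw [tp_last (show C < i + k by omega)]
        by_cases h3 : i ≤ C
        · rw [tpv i hi1 h3, hTC]
          have h4 : (i:ℝ) + k = C + 1 := by exact_mod_cast (show i + k = C + 1 by omega)
          have h5 : (i:ℝ) = C + 1 - k := by linarith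
          rw [h5]
          linarith [hτ1, hμlt]
        · rw [tp_last (by omega)]; linarith
  have key1 : ∀ i : ℕ, i ≤ M → tp N C Δt m i + τ ≤ tp N C Δt m (i+(k+1)) := by
    intro i hi
    rcases Nat.eq_zero_or_pos i with rfl | hi1
    · rw [tp_zero, show (0:ℕ) + (k+1) = k+1 from by omega,
        tpv (k+1) (by omega) (by omega), zero_add]
      push_cast
      linarith [hB]
    · by_cases h2 : i + (k+1) ≤ C
      · rw [tpv i hi1 (by omega), tpv (i+(k+1)) (by omega) h2]
        push_cast
        linarith [hB]
      · rw [tp_last (show C < i + (k+1) by omega), tpv i hi1 (by omega), hTC]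
        have h4 : (i:ℝ) + (k+1) = C + 1 := by exact_mod_cast (show i + (k+1) = C + 1 by omega)
        have h5 : (i:ℝ) = C - k := by linarith
        rw [h5]
        linarith [hA]
  have hpt0 : pt N C Δt m k τ 0 = τ := by
    simp [pt, tp_zero]
  have hlastT : tp N C Δt m (M+(k+1)) = T N Δt := by
    rw [show M + (k+1) = C + 1 from by omega, tp_last (by omega)]
  have hptn : pt N C Δt m k τ (2*M+1) = T N Δt := by
    rw [pt_odd, hlastT]
  -- pointwise formulas on the open pieces
  have keyE : ∀ i : ℕ, i ≤ M → ∀ t ∈ Set.Ioo (tp N C Δt m i + τ) (tp N C Δt m (i+(k+1))),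
      fIg N C Δt c₂ m τ ν t = Complex.exp (2 * Real.pi * Complex.I *
        ((((2 * ctil N C Δt * τ - (k:ℝ)/Δt - ν)) * t +
          (((m:ℝ)/T N Δt) * τ - ctil N C Δt * τ^2 - (i:ℝ) * τ / Δt) : ℝ) : ℂ)) := by
    intro i hi t ht
    obtain ⟨htl, htr⟩ := ht
    have h2' := key2 (i+1) (by omega)
    rw [show (i+1)+k = i+(k+1) from by omega] at h2'
    have h2i := key2 i (by omega)
    have hnn := tp_nonneg hN hC hΔt hmle
    have hle := tp_le_T hN hC hΔt hmle
    have ht0 : 0 ≤ t := by linarith [hnn i]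
    have htT : t < T N Δt := lt_of_lt_of_le htr (hle _)
    have hs0 : 0 ≤ t - τ := by linarith [hnn i]
    have h3 : tp N C Δt m i ≤ t - τ := by linarith
    have h4 : t - τ < tp N C Δt m (i+1) := by linarith
    have hsT : t - τ < T N Δt := lt_of_lt_of_le h4 (hle _)
    have h1 : tp N C Δt m (i+k) ≤ t := by linarith
    have h2 : t < tp N C Δt m ((i+k)+1) := by
      rw [show (i+k)+1 = i+(k+1) from by omega]; exact htr
    show phi N C Δt c₂ m t * (starRingEnd ℂ) (phi N C Δt c₂ m (t - τ)) *
      Complex.exp (-(2 * Real.pi * Complex.I * ((ν * t : ℝ) : ℂ))) = _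
    rw [integrand_formula hN hC hΔt hmle (show i+k ≤ C by omega) (show i ≤ C by omega)
      ht0 htT hs0 hsT h1 h2 h3 h4]
    congr 1
    push_cast
    ring
  have keyO : ∀ i : ℕ, i < M → ∀ t ∈ Set.Ioo (tp N C Δt m (i+(k+1))) (tp N C Δt m (i+1) + τ),
      fIg N C Δt c₂ m τ ν t = Complex.exp (2 * Real.pi * Complex.I *
        ((((2 * ctil N C Δt * τ - (k:ℝ)/Δt - ν - 1/Δt)) * t +
          (((m:ℝ)/T N Δt) * τ - ctil N C Δt * τ^2 - (i:ℝ) * τ / Δt) : ℝ) : ℂ)) := by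
    intro i hi t ht
    obtain ⟨htl, htr⟩ := ht
    have hk1i := key1 i (by omega)
    have hk1i' := key1 (i+1) (by omega)
    have hnn := tp_nonneg hN hC hΔt hmle
    have hle := tp_le_T hN hC hΔt hmle
    have h1 : tp N C Δt m (i+(k+1)) ≤ t := le_of_lt htl
    have h2 : t < tp N C Δt m ((i+(k+1))+1) := by
      rw [show (i+(k+1))+1 = (i+1)+(k+1) from by omega]
      exact lt_of_lt_of_le htr hk1i'
    have ht0 : 0 ≤ t := le_trans (hnn _) h1
    have htT : t < T N Δt := lt_of_lt_of_le h2 (hle _)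
    have h3 : tp N C Δt m i ≤ t - τ := by linarith
    have h4 : t - τ < tp N C Δt m (i+1) := by linarith
    have hs0 : 0 ≤ t - τ := le_trans (hnn i) h3
    have hsT : t - τ < T N Δt := lt_of_lt_of_le h4 (hle _)
    show phi N C Δt c₂ m t * (starRingEnd ℂ) (phi N C Δt c₂ m (t - τ)) *
      Complex.exp (-(2 * Real.pi * Complex.I * ((ν * t : ℝ) : ℂ))) = _
    rw [integrand_formula hN hC hΔt hmle (show i+(k+1) ≤ C by omega) (show i ≤ C by omega)
      ht0 htT hs0 hsT h1 h2 h3 h4]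
    congr 1
    push_cast
    ring
  -- interval integrability of each piece
  have hIntAll : ∀ j, j < 2*M+1 → IntervalIntegrable (fIg N C Δt c₂ m τ ν)
      MeasureTheory.volume (pt N C Δt m k τ j) (pt N C Δt m k τ (j+1)) := by
    intro j hj
    rcases Nat.even_or_odd j with ⟨i, hi⟩ | ⟨i, hi⟩
    · have hj2 : j = 2*i := by omega
      subst hj2
      have hiM : i ≤ M := by omega
      rw [pt_even, pt_odd]
      exact (integral_piece (key1 i hiM) (keyE i hiM)).1
    · have hj2 : j = 2*i+1 := by omega
      subst hj2
      have hiM : i < M := by omega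
      have h2' := key2 (i+1) (by omega)
      rw [show (i+1)+k = i+(k+1) from by omega] at h2'
      rw [pt_odd, show 2*i+1+1 = 2*(i+1) from by omega, pt_even]
      exact (integral_piece h2' (keyO i hiM)).1
  -- values of the pieces
  have valE : ∀ i : ℕ, i ≤ M →
      (∫ t in (pt N C Δt m k τ (2*i))..(pt N C Δt m k τ (2*i+1)), fIg N C Δt c₂ m τ ν t)
        = Complex.exp (2 * Real.pi * Complex.I *
            (((((m:ℝ)/T N Δt) * τ - ctil N C Δt * τ^2 - (i:ℝ) * τ / Δt) : ℝ) : ℂ)) *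
          Iind (2 * ctil N C Δt * τ - (k:ℝ)/Δt - ν)
            (tp N C Δt m i + τ) (tp N C Δt m (i+(k+1))) := by
    intro i hi
    rw [pt_even, pt_odd]
    exact (integral_piece (key1 i hi) (keyE i hi)).2
  have valO : ∀ i : ℕ, i < M →
      (∫ t in (pt N C Δt m k τ (2*i+1))..(pt N C Δt m k τ (2*i+2)), fIg N C Δt c₂ m τ ν t)
        = Complex.exp (2 * Real.pi * Complex.I *
            (((((m:ℝ)/T N Δt) * τ - ctil N C Δt * τ^2 - (i:ℝ) * τ / Δt) : ℝ) : ℂ)) *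
          Iind (2 * ctil N C Δt * τ - (k:ℝ)/Δt - ν - 1/Δt)
            (tp N C Δt m (i+(k+1))) (tp N C Δt m (i+1) + τ) := by
    intro i hi
    have h2' := key2 (i+1) (by omega)
    rw [show (i+1)+k = i+(k+1) from by omega] at h2'
    rw [pt_odd, show 2*i+1+1 = 2*(i+1) from by omega, pt_even]
    exact (integral_piece h2' (keyO i hi)).2
  -- reduce the ambiguity function to an interval integral
  have hzero : ∀ t : ℝ, fIg N C Δt c₂ m τ ν t
      = Set.indicator (Set.Ico τ (T N Δt)) (fIg N C Δt c₂ m τ ν) t := by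
    intro t
    by_cases hmem : t ∈ Set.Ico τ (T N Δt)
    · rw [Set.indicator_of_mem hmem]
    · rw [Set.indicator_of_notMem hmem]
      rw [Set.mem_Ico, not_and_or, not_le, not_lt] at hmem
      unfold fIg
      rcases hmem with h | h
      · have hz : phi N C Δt c₂ m (t - τ) = 0 := by
          unfold phi; rw [if_neg (by intro hcon; linarith [hcon.1])]
        rw [hz]; simp
      · have hz : phi N C Δt c₂ m t = 0 := by
          unfold phi; rw [if_neg (by intro hcon; linarith [hcon.2])]
        rw [hz]; simp
  have hAF : AF (phi N C Δt c₂ m) (phi N C Δt c₂ m) τ ν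
      = ∫ t, fIg N C Δt c₂ m τ ν t := rfl
  have hsum : (∫ t, fIg N C Δt c₂ m τ ν t)
      = ∑ j ∈ Finset.range (2*M+1),
          ∫ t in (pt N C Δt m k τ j)..(pt N C Δt m k τ (j+1)), fIg N C Δt c₂ m τ ν t := by
    rw [MeasureTheory.integral_congr_ae (Filter.EventuallyEq.of_eq (funext hzero)),
        MeasureTheory.integral_indicator measurableSet_Ico,
        restrict_Ico_eq_restrict_Ioc,
        ← intervalIntegral.integral_of_le hτT]
    have h := intervalIntegral.sum_integral_adjacent_intervals hIntAll
    rw [hpt0, hptn] at h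
    exact h.symm
  -- split-exponent lemma
  have hsplit : ∀ i : ℕ, Complex.exp (2 * Real.pi * Complex.I *
        (((((m:ℝ)/T N Δt) * τ - ctil N C Δt * τ^2 - (i:ℝ) * τ / Δt) : ℝ) : ℂ))
      = Complex.exp (2 * Real.pi * Complex.I *
          ((((m : ℝ) / T N Δt) * τ - ctil N C Δt * τ ^ 2 : ℝ) : ℂ)) *
        Complex.exp (-(2 * Real.pi * Complex.I * ((((i : ℝ) / Δt) * τ : ℝ) : ℂ))) := by
    intro i
    rw [← Complex.exp_add]
    congr 1
    push_cast
    ring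
  rw [hAF, hsum, Finset.sum_range_succ, sum_range_two_mul]
  have hpair : ∀ i ∈ Finset.range M,
      ((∫ t in (pt N C Δt m k τ (2*i))..(pt N C Δt m k τ (2*i+1)), fIg N C Δt c₂ m τ ν t)
        + ∫ t in (pt N C Δt m k τ (2*i+1))..(pt N C Δt m k τ (2*i+1+1)), fIg N C Δt c₂ m τ ν t)
      = Complex.exp (2 * Real.pi * Complex.I *
          ((((m : ℝ) / T N Δt) * τ - ctil N C Δt * τ ^ 2 : ℝ) : ℂ)) *
        (Complex.exp (-(2 * Real.pi * Complex.I * ((((i : ℝ) / Δt) * τ : ℝ) : ℂ))) *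
          (Iind (2 * ctil N C Δt * τ - (k : ℝ) / Δt - ν)
              (tp N C Δt m i + τ) (tp N C Δt m (i + (k + 1))) +
            Iind (2 * ctil N C Δt * τ - (k : ℝ) / Δt - ν - 1 / Δt)
              (tp N C Δt m (i + (k + 1))) (tp N C Δt m (i + 1) + τ))) := by
    intro i hi
    have hiM : i < M := Finset.mem_range.mp hi
    rw [show 2*i+1+1 = 2*i+2 from rfl, valE i hiM.le, valO i hiM, hsplit i]
    ring
  rw [Finset.sum_congr rfl hpair]
  rw [valE M le_rfl, hlastT, hsplit M]
  rw [mul_add, Finset.mul_sum]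
  ring

end AFDM
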